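/- arXiv:1411.4861 — 2 statements merged into one kernel-verified Lean document; each statement's English description precedes it below -/
import Mathlib

section
/- Assume there exists α ∈ I with α ≠ e (i.e. |Irr(𝔾)| ≥ 2). Then for every finite subset G ⊆ S there exists x ∈ S such that ({x} ∘ G) ∘ {x̄} ⊆ G₂. (Lemma 2.5(5) of the paper; one may take x = α :: e^k with k = 1 + max{length y : y ∈ G}.) -/
/- Combinatorial model of the Lemeux–Tarrago fusion rules for a free wreath
product 𝔾 ≀* S_N⁺. Words over `I` (a type modeling `Irr 𝔾`) label the
irreducible corepresentations. -/

variable {I : Type*}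

/-- The conjugate word `x̄ = (x.map bar).reverse`. -/
def conjW (bar : I → I) (x : List I) : List I := (x.map bar).reverse

/-- `fusW bar fus x y` is the set of words `z` such that `ω(z)` is a direct
summand of `ω(x) ⊗ ω(y)`: there are `u, t, v` with `x = u ++ t`,
`y = t̄ ++ v` and either `z = u ++ v` (concatenation), or `u ≠ []`, `v ≠ []`
and `z = u.dropLast ++ [γ] ++ v.tail` for some `γ ∈ fus u.getLast v.head`
(fusion). -/
def fusW (bar : I → I) (fus : I → I → Set I) (x y : List I) : Set (List I) :=
  {z | ∃ u t v : List I, x = u ++ t ∧ y = conjW bar t ++ v ∧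
    (z = u ++ v ∨ ∃ a b : I, u.getLast? = some a ∧ v.head? = some b ∧
      ∃ γ ∈ fus a b, z = u.dropLast ++ [γ] ++ v.tail)}

/-- `A ∘ B` for sets of words. -/
def fusSet (bar : I → I) (fus : I → I → Set I) (A B : Set (List I)) :
    Set (List I) :=
  {z | ∃ x ∈ A, ∃ y ∈ B, z ∈ fusW bar fus x y}

/-- `E₁`: words starting with `e`, together with the empty word. -/
def E₁ (e : I) : Set (List I) := {x | x = [] ∨ x.head? = some e}

/-- `E₂`: words all of whose letters equal `e`. -/
def E₂ (e : I) : Set (List I) := {x | ∃ k : ℕ, x = List.replicate k e}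

/-- `E₃ = E₁ \ E₂`. -/
def E₃ (e : I) : Set (List I) := E₁ e \ E₂ e

/-- `S`: words containing at least one letter different from `e`. -/
def Sset (e : I) : Set (List I) := {x | x ∉ E₂ e}

/-- `G₁`: nonempty words starting with a letter different from `e`. -/
def G₁ (e : I) : Set (List I) := {x | x ≠ [] ∧ x.head? ≠ some e}

/-- `G₂`: nonempty words starting and ending with letters different from `e`. -/
def G₂ (e : I) : Set (List I) :=
  {x | x ≠ [] ∧ x.head? ≠ some e ∧ x.getLast? ≠ some e}


section Aux

variable {bar : I → I} {e : I} {fus : I → I → Set I}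

lemma conjW_replicate (hbare : bar e = e) (n : ℕ) :
    conjW bar (List.replicate n e) = List.replicate n e := by
  simp [conjW, List.map_replicate, hbare, List.reverse_replicate]

lemma conjW_conjW (hbar : ∀ a : I, bar (bar a) = a) (l : List I) :
    conjW bar (conjW bar l) = l := by
  simp only [conjW, List.map_reverse, List.reverse_reverse, List.map_map]
  conv_rhs => rw [← List.map_id l]
  exact List.map_congr_left fun a _ => hbar a

lemma split_x {u t : List I} {a : I} {k : ℕ}
    (h : u ++ t = a :: List.replicate k e) :
    (u = [] ∧ t = a :: List.replicate k e) ∨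
      ∃ j ≤ k, u = a :: List.replicate j e ∧ t = List.replicate (k - j) e := by
  cases u with
  | nil => left; simpa using h
  | cons c u' =>
    right
    rw [List.cons_append, List.cons_eq_cons] at h
    obtain ⟨rfl, h⟩ := h
    have hu' : u' = List.replicate u'.length e := by
      refine List.eq_replicate_of_mem fun b hb => ?_
      have : b ∈ List.replicate k e := h ▸ List.mem_append_left _ hb
      exact List.eq_of_mem_replicate this
    have ht : t = List.replicate t.length e := by
      refine List.eq_replicate_of_mem fun b hb => ?_
      have : b ∈ List.replicate k e := h ▸ List.mem_append_right _ hb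
      exact List.eq_of_mem_replicate this
    have hlen : u'.length + t.length = k := by
      have := congrArg List.length h
      simpa using this
    exact ⟨u'.length, by omega, by rw [← hu'], by rw [ht]; congr 1; omega⟩

lemma split_xbar {w v : List I} {b : I} {k : ℕ}
    (h : w ++ v = List.replicate k e ++ [b]) :
    (∃ n ≤ k, w = List.replicate n e ∧ v = List.replicate (k - n) e ++ [b]) ∨
      (w = List.replicate k e ++ [b] ∧ v = []) := by
  have hlen : w.length + v.length = k + 1 := by
    have := congrArg List.length h
    simpa using this
  by_cases hw : w.length ≤ k
  · left
    refine ⟨w.length, hw, ?_, ?_⟩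
    · have h' := congrArg (List.take w.length) h
      rw [List.take_left, List.take_append_of_le_length (by simpa using hw),
        List.take_replicate, min_eq_left hw] at h'
      exact h'
    · have h' := congrArg (List.drop w.length) h
      rw [List.drop_left, List.drop_append_of_le_length (by simpa using hw),
        List.drop_replicate] at h'
      exact h' 
  · right
    have hv : v.length = 0 := by omega
    have hv' : v = [] := List.eq_nil_of_length_eq_zero hv
    subst hv'
    simp only [List.append_nil] at h
    exact ⟨h, rfl⟩

lemma not_suffix_of_inv {z v : List I} {α : I} {m k : ℕ}
    (hinv : z = α :: (List.replicate m e ++ v)) (hvlen : v.length < k)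
    (hc : ∃ c ∈ v, c ≠ e) : ¬ (List.replicate k e <:+ z) := by
  intro hsuf
  obtain ⟨c, hcv, hce⟩ := hc
  obtain ⟨s, t, rfl⟩ := List.append_of_mem hcv
  have hsuf2 : (c :: t) <:+ z :=
    ⟨α :: (List.replicate m e ++ s), by simp [hinv]⟩
  rcases List.suffix_or_suffix_of_suffix hsuf2 hsuf with h | h
  · exact hce (List.eq_of_mem_replicate (h.subset List.mem_cons_self))
  · have h1 := h.length_le
    have h2 : t.length + 1 ≤ (s ++ c :: t).length := by simp
    simp at h1
    omega

lemma step1 {α : I} {k : ℕ} {y z : List I}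
    (hbare : bar e = e) (hfus_left : ∀ β : I, fus e β = {β})
    (hylen : y.length < k) (hy : ∃ c ∈ y, c ≠ e)
    (hz : z ∈ fusW bar fus (α :: List.replicate k e) y) :
    ∃ m v, z = α :: (List.replicate m e ++ v) ∧ v.length < k ∧
      ∃ c ∈ v, c ≠ e := by
  obtain ⟨u, t, v, h1, h2, hcase⟩ := hz
  rcases split_x h1.symm with ⟨rfl, rfl⟩ | ⟨j, hj, rfl, rfl⟩
  · exfalso
    have := congrArg List.length h2
    simp [conjW] at this
    omega
  · rw [conjW_replicate hbare] at h2
    have hylen2 : (k - j) + v.length = y.length := by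
      have := congrArg List.length h2
      simp at this
      omega
    have hvc : ∃ c ∈ v, c ≠ e := by
      obtain ⟨c, hcy, hce⟩ := hy
      refine ⟨c, ?_, hce⟩
      rw [h2] at hcy
      rcases List.mem_append.1 hcy with h | h
      · exact absurd (List.eq_of_mem_replicate h) hce
      · exact h
    have hvlen : v.length < k := by omega
    rcases hcase with rfl | ⟨a, b, ha, hb, γ, hγ, rfl⟩
    · exact ⟨j, v, rfl, hvlen, hvc⟩
    · -- fusion case; j ≥ 1 since k - j ≤ y.length < k
      have hj1 : 1 ≤ j := by omega
      obtain ⟨j', rfl⟩ : ∃ j', j = j' + 1 := ⟨j - 1, by omega⟩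
      have hu : α :: List.replicate (j' + 1) e =
          (α :: List.replicate j' e) ++ [e] := by
        simp [List.replicate_succ' (n := j') (a := e)]
      rw [hu] at ha
      rw [List.getLast?_concat] at ha
      obtain rfl : e = a := by injection ha
      rw [hfus_left] at hγ
      have hγb : γ = b := hγ
      have hv : v = b :: v.tail := (List.cons_head?_tail hb).symm
      refine ⟨j', v, ?_, hvlen, hvc⟩
      rw [hu, List.dropLast_concat, hγb]
      conv_rhs => rw [hv]
      simp

lemma step2 {α : I} {k : ℕ} {z z' : List I}
    (hbar : ∀ a : I, bar (bar a) = a) (hbare : bar e = e)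
    (hfus_right : ∀ β : I, fus β e = {β}) (hα : α ≠ e)
    (hinv : ∃ m v, z = α :: (List.replicate m e ++ v) ∧ v.length < k ∧
      ∃ c ∈ v, c ≠ e)
    (hz' : z' ∈ fusW bar fus z (List.replicate k e ++ [bar α])) :
    z' ∈ G₂ e := by
  obtain ⟨m, w, hzeq, hwlen, hwc⟩ := hinv
  have hbarα : bar α ≠ e := fun h => hα (by rw [← hbar α, h, hbare])
  have hnsuf := not_suffix_of_inv (e := e) hzeq hwlen hwc
  obtain ⟨u, t, v, h1, h2, hcase⟩ := hz'
  rcases split_xbar h2.symm with ⟨n, hn, hct, rfl⟩ | ⟨hct, rfl⟩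
  · -- conjW bar t = replicate n e, so t = replicate n e
    have ht : t = List.replicate n e := by
      rw [← conjW_conjW hbar t, hct, conjW_replicate hbare]
    subst ht
    have hu : u ≠ [] := by
      rintro rfl
      rw [List.nil_append] at h1
      cases n with
      | zero => simp [hzeq] at h1
      | succ n' =>
        rw [List.replicate_succ] at h1
        rw [hzeq] at h1
        exact hα (by injection h1)
    have hheadu : u.head? = some α := by
      have : z.head? = some α := by rw [hzeq]; rfl
      rw [h1, List.head?_append_of_ne_nil _ hu] at this
      exact this
    have key : ∀ p : ℕ, u ++ (List.replicate p e ++ [bar α]) ∈ G₂ e := by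
      intro p
      refine ⟨by simp [hu], ?_, ?_⟩
      · rw [List.head?_append_of_ne_nil _ hu, hheadu]
        exact fun h => hα (by injection h)
      · rw [← List.append_assoc, List.getLast?_concat]
        exact fun h => hbarα (by injection h)
    rcases hcase with rfl | ⟨a, b, ha, hb, γ, hγ, rfl⟩
    · exact key (k - n)
    · -- fusion case
      rcases Nat.eq_zero_or_pos (k - n) with h0 | hpos
      · exfalso
        apply hnsuf
        have hnk : n = k := by omega
        subst hnk
        exact ⟨u, h1.symm⟩
      · obtain ⟨p, hp⟩ : ∃ p, k - n = p + 1 := ⟨k - n - 1, by omega⟩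
        rw [hp, List.replicate_succ, List.cons_append] at hb ⊢
        simp only [List.head?_cons] at hb
        obtain rfl : e = b := by injection hb
        rw [hfus_right] at hγ
        have hγa : γ = a := hγ
        have hune : u ≠ [] := by
          intro h; rw [h] at ha; simp at ha
        have ha' : u.getLast hune = a := by
          rw [List.getLast?_eq_getLast hune] at ha
          injection ha
        have hua : u.dropLast ++ [γ] = u := by
          rw [hγa, ← ha']
          exact List.dropLast_append_getLast hune
        have : u.dropLast ++ [γ] ++ (e :: (List.replicate p e ++ [bar α])).tail
            = u ++ (List.replicate p e ++ [bar α]) := by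
          rw [hua]; simp
        rw [this]
        exact key p
  · -- t̄ = replicate k e ++ [bar α], v = []: impossible
    exfalso
    apply hnsuf
    have ht : t = α :: List.replicate k e := by
      rw [← conjW_conjW hbar t, hct]
      simp [conjW, hbare, hbar, List.replicate_succ']
    rw [ht] at h1
    exact ⟨u ++ [α], by rw [h1]; simp⟩

end Aux

theorem stmt4 (bar : I → I) (e : I) (fus : I → I → Set I)
    (hbar : ∀ a : I, bar (bar a) = a) (hbare : bar e = e)
    (hfus_left : ∀ β : I, fus e β = {β}) (hfus_right : ∀ β : I, fus β e = {β})
    (hex : ∃ α : I, α ≠ e) :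
    ∀ G : Finset (List I), ↑G ⊆ Sset e →
      ∃ x ∈ Sset e,
        fusSet bar fus (fusSet bar fus {x} (↑G : Set (List I)))
          {conjW bar x} ⊆ G₂ e :=  by
  intro G hG
  obtain ⟨α, hα⟩ := hex
  set k : ℕ := G.sup List.length + 1 with hk
  set x : List I := α :: List.replicate k e with hx
  have hxS : x ∈ Sset e := by
    rintro ⟨n, hn⟩
    cases n with
    | zero => simp [hx] at hn
    | succ n' =>
      rw [List.replicate_succ] at hn
      rw [hx] at hn
      exact hα (by injection hn)
  refine ⟨x, hxS, ?_⟩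
  have hconjx : conjW bar x = List.replicate k e ++ [bar α] := by
    rw [hx]
    simp [conjW, hbare, List.reverse_replicate]
  rintro z' ⟨z, ⟨x', hx', y, hy, hz⟩, w, hw, hz'⟩
  obtain rfl : x' = x := hx'
  obtain rfl : w = conjW bar x := hw
  rw [hconjx] at hz'
  have hyS : y ∉ E₂ e := hG hy
  have hyc : ∃ c ∈ y, c ≠ e := by
    by_contra h
    push_neg at h
    exact hyS ⟨y.length, List.eq_replicate_of_mem h⟩
  have hylen : y.length < k := by
    have := Finset.le_sup (f := List.length) hy
    omega
  have hinv := step1 (α := α) hbare hfus_left hylen hyc hz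
  exact step2 hbar hbare hfus_right hα hinv hz'
end

section
/- For i ∈ {2, 4} one has ({e^i} ∘ G₁) ∘ {e^i} ⊆ E₃: every word labeling a direct summand of ω(1^i) ⊗ ω(g) ⊗ ω(1^i) with g ∈ G₁ begins with e and contains a letter different from e. (Lemma 3.4(2) of the paper.) -/
/- Combinatorial model of the Lemeux–Tarrago fusion rules for a free wreath
product 𝔾 ≀* S_N⁺. Words over `I` (a type modeling `Irr 𝔾`) label the
irreducible corepresentations. -/

variable {I : Type*}

lemma mem_E₂_iff (e : I) (z : List I) : z ∈ E₂ e ↔ ∀ a ∈ z, a = e := by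
  constructor
  · rintro ⟨k, rfl⟩ a ha; exact List.eq_of_mem_replicate ha
  · intro h; exact ⟨z.length, List.eq_replicate_length.2 h⟩

lemma step1_s6 (bar : I → I) (e : I) (fus : I → I → Set I)
    (hbare : bar e = e) (hfus_left : ∀ β : I, fus e β = {β})
    {i : ℕ} (hi : 2 ≤ i) {g z : List I} (hg : g ∈ G₁ e)
    (hz : z ∈ fusW bar fus (List.replicate i e) g) :
    ∃ j, 1 ≤ j ∧ z = List.replicate j e ++ g := by
  obtain ⟨u, t, v, hx, hy, hcase⟩ := hz
  have hte : ∀ a ∈ t, a = e := by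
    intro a ha
    have : a ∈ List.replicate i e := by rw [hx]; exact List.mem_append_right u ha
    exact List.eq_of_mem_replicate this
  have ht : t = List.replicate t.length e := List.eq_replicate_length.2 hte
  have hconj : conjW bar t = List.replicate t.length e := by
    rw [ht]; simp [conjW, hbare, List.map_replicate, List.reverse_replicate]
  -- t must be empty, else g starts with e
  have ht0 : t = [] := by
    rcases Nat.eq_zero_or_pos t.length with h0 | hpos
    · exact List.length_eq_zero_iff.mp h0
    · exfalso
      obtain ⟨k, hk⟩ := Nat.exists_eq_add_of_lt hpos
      have : g.head? = some e := by
        rw [hy, hconj]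
        have : t.length = k + 1 := by omega
        rw [this, List.replicate_succ]; rfl
      exact hg.2 this
  subst ht0
  have hu : u = List.replicate i e := by have := hx; simp at this; exact this.symm
  have hv : v = g := by have := hy; simp [conjW] at this; exact this.symm
  subst hu; subst hv
  rcases hcase with rfl | ⟨a, b, ha, hb, γ, hγ, rfl⟩
  · exact ⟨i, by omega, rfl⟩
  · have hae : a = e := by
      have : (List.replicate i e).getLast? = some e := by
        obtain ⟨k, rfl⟩ : ∃ k, i = k + 1 := ⟨i - 1, by omega⟩
        rw [List.getLast?_eq_getLast (l := List.replicate (k + 1) e) (by simp), List.getLast_replicate]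
      rw [this] at ha; exact (Option.some_injective _ ha).symm
    rw [hae, hfus_left] at hγ
    have hγb : γ = b := hγ
    subst hγb
    refine ⟨i - 1, by omega, ?_⟩
    have hdl : (List.replicate i e).dropLast = List.replicate (i - 1) e := by
      rw [List.dropLast_eq_take]; simp [List.take_replicate]
    rw [hdl, List.append_assoc]
    congr 1
    exact List.cons_head?_tail hb

lemma step2_s6 (bar : I → I) (e : I) (fus : I → I → Set I)
    (hbar : ∀ a : I, bar (bar a) = a) (hbare : bar e = e)
    (hfus_right : ∀ β : I, fus β e = {β})
    {i j : ℕ} (hj : 1 ≤ j) {g z : List I} (hg : g ∈ G₁ e)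
    (hz : z ∈ fusW bar fus (List.replicate j e ++ g) (List.replicate i e)) :
    z ∈ E₃ e := by
  obtain ⟨u, t, v, hx, hy, hcase⟩ := hz
  -- all letters of conjW bar t and v are e
  have hmem : ∀ a ∈ conjW bar t ++ v, a = e := by
    intro a ha
    have : a ∈ List.replicate i e := by rw [hy]; exact ha
    exact List.eq_of_mem_replicate this
  have hte : ∀ a ∈ t, a = e := by
    intro a ha
    have hb : bar a ∈ conjW bar t := by
      simp only [conjW, List.mem_reverse, List.mem_map]
      exact ⟨a, ha, rfl⟩
    have := hmem _ (List.mem_append_left v hb)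
    calc a = bar (bar a) := (hbar a).symm
    _ = bar e := by rw [this]
    _ = e := hbare
  have hve : ∀ a ∈ v, a = e := fun a ha => hmem _ (List.mem_append_right _ ha)
  -- g's head is a non-e letter that lies in u
  obtain ⟨h0, g', rfl⟩ : ∃ h0 g', g = h0 :: g' := by
    cases g with
    | nil => exact absurd rfl hg.1
    | cons h0 g' => exact ⟨h0, g', rfl⟩
  have hh0 : h0 ≠ e := fun h => hg.2 (by simp [h])
  have hh0u : h0 ∈ u := by
    have : h0 ∈ u ++ t := by
      rw [← hx]; exact List.mem_append_right _ List.mem_cons_self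
    rcases List.mem_append.mp this with h | h
    · exact h
    · exact absurd (hte _ h) hh0
  have hune : u ≠ [] := fun h => by simp [h] at hh0u
  have huh : u.head? = some e := by
    have hxh : (u ++ t).head? = some e := by
      rw [← hx]
      obtain ⟨k, rfl⟩ : ∃ k, j = k + 1 := ⟨j - 1, by omega⟩
      rw [List.replicate_succ]; rfl
    rwa [List.head?_append_of_ne_nil u hune] at hxh
  -- in both cases z = u ++ w for some w
  have key : ∀ w : List I, u ++ w ∈ E₃ e := by
    intro w
    constructor
    · right
      rw [List.head?_append_of_ne_nil u hune]; exact huh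
    · intro hE2
      have := (mem_E₂_iff e _).mp hE2 h0 (List.mem_append_left w hh0u)
      exact hh0 this
  rcases hcase with rfl | ⟨a, b, ha, hb, γ, hγ, rfl⟩
  · exact key v
  · have hbe : b = e := hve b (by
      have := List.cons_head?_tail hb
      rw [← this]; exact List.mem_cons_self)
    rw [hbe, hfus_right] at hγ
    have hγa : γ = a := hγ
    rw [hγa, show u.dropLast ++ [a] ++ v.tail = u ++ v.tail from by
      rw [List.dropLast_append_getLast? a ha]]
    exact key v.tail

theorem stmt6 (bar : I → I) (e : I) (fus : I → I → Set I)
    (hbar : ∀ a : I, bar (bar a) = a) (hbare : bar e = e)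
    (hfus_left : ∀ β : I, fus e β = {β}) (hfus_right : ∀ β : I, fus β e = {β}) :
    ∀ i ∈ ({2, 4} : Set ℕ),
      fusSet bar fus (fusSet bar fus {List.replicate i e} (G₁ e))
        {List.replicate i e} ⊆ E₃ e := by
  intro i hi z hz
  have hi2 : 2 ≤ i := by rcases hi with rfl | rfl <;> norm_num
  obtain ⟨x, hx, y, hy, hzxy⟩ := hz
  obtain ⟨x₀, hx₀, g, hg, hxfus⟩ := hx
  rw [Set.mem_singleton_iff] at hx₀ hy
  subst hx₀; subst hy
  obtain ⟨k, hk, rfl⟩ := step1_s6 bar e fus hbare hfus_left hi2 hg hxfus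
  exact step2_s6 bar e fus hbar hbare hfus_right hk hg hzxy
end
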